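/- Descent lemma for coordinate-wise adaptive updates (Lemma 5). Let F : ℝ^d → ℝ be differentiable with L_F-Lipschitz gradient. Let 0 < c_l ≤ c_u and η > 0 satisfy η L_F ≤ c_l/(2 c_u²). Let w, m ∈ ℝ^d and let s ∈ ℝ^d satisfy η c_l ≤ s_j ≤ η c_u for every coordinate j. Set w₊ = w − s ⊙ m, where ⊙ denotes the coordinatewise product. Then F(w₊) ≤ F(w) + (η c_u/2)‖∇F(w) − m‖² − (η c_l/2)‖∇F(w)‖² − (η c_l/4)‖m‖². -/

import Mathlib

open InnerProductSpace

/-- Quadratic upper (descent) bound for a function with Lipschitz gradient. -/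
lemma descent_quadratic {E : Type*} [NormedAddCommGroup E] [InnerProductSpace ℝ E]
    [CompleteSpace E] (F : E → ℝ) (LF : ℝ)
    (hFdiff : Differentiable ℝ F)
    (hFsmooth : ∀ x y, ‖gradient F x - gradient F y‖ ≤ LF * ‖x - y‖)
    (x y : E) :
    F y ≤ F x + ⟪gradient F x, y - x⟫_ℝ + LF / 2 * ‖y - x‖ ^ 2 := by
  set v := y - x with hv
  have hgrad : ∀ z : E, ∀ u : E, (fderiv ℝ F z) u = ⟪gradient F z, u⟫_ℝ := by
    intro z u
    rw [gradient, toDual_symm_apply]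
  have hline : ∀ t : ℝ, HasDerivAt (fun t : ℝ => x + t • v) v t := by
    intro t
    simpa using ((hasDerivAt_id t).smul_const v).const_add x
  have hF : ∀ t : ℝ, HasDerivAt (fun t : ℝ => F (x + t • v))
      (⟪gradient F (x + t • v), v⟫_ℝ) t := by
    intro t
    have := (hFdiff (x + t • v)).hasFDerivAt.comp_hasDerivAt t (hline t)
    rw [hgrad] at this
    exact this
  set ψ : ℝ → ℝ := fun t => F (x + t • v) - t * ⟪gradient F x, v⟫_ℝ - LF / 2 * ‖v‖ ^ 2 * t ^ 2
    with hψ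
  have hψd : ∀ t : ℝ, HasDerivAt ψ
      (⟪gradient F (x + t • v), v⟫_ℝ - ⟪gradient F x, v⟫_ℝ - LF * ‖v‖ ^ 2 * t) t := by
    intro t
    have h1 : HasDerivAt (fun t : ℝ => t * ⟪gradient F x, v⟫_ℝ) (⟪gradient F x, v⟫_ℝ) t := by
      simpa using (hasDerivAt_id t).mul_const _
    have h2 : HasDerivAt (fun t : ℝ => LF / 2 * ‖v‖ ^ 2 * t ^ 2) (LF * ‖v‖ ^ 2 * t) t := by
      have := (hasDerivAt_pow 2 t).const_mul (LF / 2 * ‖v‖ ^ 2)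
      refine this.congr_deriv ?_
      push_cast
      ring
    exact ((hF t).sub h1).sub h2
  have hanti : AntitoneOn ψ (Set.Icc 0 1) := by
    apply antitoneOn_of_deriv_nonpos (convex_Icc 0 1)
    · exact fun t _ => (hψd t).continuousAt.continuousWithinAt
    · exact fun t _ => (hψd t).differentiableAt.differentiableWithinAt
    · intro t ht
      rw [interior_Icc] at ht
      rw [(hψd t).deriv]
      have hCS : ⟪gradient F (x + t • v) - gradient F x, v⟫_ℝ
          ≤ ‖gradient F (x + t • v) - gradient F x‖ * ‖v‖ := real_inner_le_norm _ _
      have hlip := hFsmooth (x + t • v) x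
      have h3 : ‖(x + t • v) - x‖ = t * ‖v‖ := by
        rw [add_sub_cancel_left, norm_smul, Real.norm_eq_abs, abs_of_nonneg ht.1.le]
      rw [h3] at hlip
      have := hCS.trans (mul_le_mul_of_nonneg_right hlip (norm_nonneg v))
      rw [inner_sub_left] at this
      nlinarith [this]
  have h01 := hanti (Set.mem_Icc.mpr ⟨le_refl 0, zero_le_one⟩)
      (Set.mem_Icc.mpr ⟨zero_le_one, le_refl 1⟩) zero_le_one
  have hy : x + v = y := by rw [hv]; abel
  have hψ0 : ψ 0 = F x := by simp [hψ]
  have hψ1 : ψ 1 = F y - ⟪gradient F x, v⟫_ℝ - LF / 2 * ‖v‖ ^ 2 := by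
    simp [hψ, hy]
  rw [hψ0, hψ1] at h01
  linarith

/-- Descent lemma for coordinate-wise adaptive updates (Lemma 5).
Here `wplus = w - s ⊙ m` is expressed coordinatewise. -/
theorem descent_lemma_adaptive
    (d : ℕ) (LF cl cu : ℝ) (hcl : 0 < cl) (hclu : cl ≤ cu)
    (F : EuclideanSpace ℝ (Fin d) → ℝ)
    (hFdiff : Differentiable ℝ F)
    (hFsmooth : ∀ x y, ‖gradient F x - gradient F y‖ ≤ LF * ‖x - y‖)
    (η : ℝ) (hη : 0 < η) (hηL : η * LF ≤ cl / (2 * cu ^ 2))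
    (w m s wplus : EuclideanSpace ℝ (Fin d))
    (hs : ∀ j, η * cl ≤ s j ∧ s j ≤ η * cu)
    (hwplus : ∀ j, wplus j = w j - s j * m j) :
    F wplus ≤ F w + (η * cu / 2) * ‖gradient F w - m‖ ^ 2
      - (η * cl / 2) * ‖gradient F w‖ ^ 2 - (η * cl / 4) * ‖m‖ ^ 2 := by
  have hcu : 0 < cu := lt_of_lt_of_le hcl hclu
  set g := gradient F w with hg
  have hdesc := descent_quadratic F LF hFdiff hFsmooth w wplus
  have e1 : ⟪g, wplus - w⟫_ℝ = ∑ j, g j * (wplus j - w j) := by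
    simp [PiLp.inner_apply, RCLike.inner_apply, mul_comm]
  have e2 : ∀ x : EuclideanSpace ℝ (Fin d), ‖x‖ ^ 2 = ∑ j, (x j) ^ 2 := by
    intro x
    rw [EuclideanSpace.norm_sq_eq]
    simp [Real.norm_eq_abs, sq_abs]
  have hL : η ^ 2 * LF * cu ^ 2 ≤ η * cl / 2 := by
    have hpos : (0:ℝ) < η * cu ^ 2 := by positivity
    have := mul_le_mul_of_nonneg_left hηL hpos.le
    calc η ^ 2 * LF * cu ^ 2 = η * cu ^ 2 * (η * LF) := by ring
      _ ≤ η * cu ^ 2 * (cl / (2 * cu ^ 2)) := this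
      _ = η * cl / 2 := by field_simp
  have key : ∀ j, g j * (wplus j - w j) + LF / 2 * (wplus j - w j) ^ 2 ≤
      η * cu / 2 * (g j - m j) ^ 2 - η * cl / 2 * (g j) ^ 2 - η * cl / 4 * (m j) ^ 2 := by
    intro j
    rw [hwplus j]
    obtain ⟨h1, h2⟩ := hs j
    have hηcl : 0 < η * cl := mul_pos hη hcl
    have ht0 : 0 < s j := lt_of_lt_of_le hηcl h1
    set a := g j; set b := m j; set t := s j
    have hh1 : 0 ≤ (t - η * cl) * a ^ 2 := mul_nonneg (by linarith) (sq_nonneg a)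
    have hh2 : 0 ≤ (t - η * cl) * b ^ 2 := mul_nonneg (by linarith) (sq_nonneg b)
    have hh3 : 0 ≤ (η * cu - t) * (a - b) ^ 2 := mul_nonneg (by linarith) (sq_nonneg _)
    rcases le_or_gt LF 0 with hLF | hLF
    · have hh4 : LF / 2 * (t * b) ^ 2 ≤ 0 := by
        apply mul_nonpos_of_nonpos_of_nonneg (by linarith) (sq_nonneg _)
      nlinarith [hh4]
    · have hh4 : 0 ≤ LF * ((η * cu - t) * (η * cu + t)) * b ^ 2 :=
        mul_nonneg (mul_nonneg hLF.le (mul_nonneg (by linarith) (by linarith))) (sq_nonneg b)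
      have hh5 := mul_le_mul_of_nonneg_right hL (sq_nonneg b)
      nlinarith [hh4, hh5]
  calc F wplus ≤ F w + ⟪g, wplus - w⟫_ℝ + LF / 2 * ‖wplus - w‖ ^ 2 := hdesc
    _ = F w + ∑ j, (g j * (wplus j - w j) + LF / 2 * (wplus j - w j) ^ 2) := by
        rw [e1, e2]
        rw [Finset.sum_add_distrib, Finset.mul_sum]
        simp only [PiLp.sub_apply]
        ring
    _ ≤ F w + ∑ j, (η * cu / 2 * (g j - m j) ^ 2 - η * cl / 2 * (g j) ^ 2
          - η * cl / 4 * (m j) ^ 2) := by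
        gcongr F w + ?_
        exact Finset.sum_le_sum fun j _ => key j
    _ = F w + (η * cu / 2) * ‖g - m‖ ^ 2 - (η * cl / 2) * ‖g‖ ^ 2
          - (η * cl / 4) * ‖m‖ ^ 2 := by
        rw [e2, e2, e2]
        simp only [Finset.sum_sub_distrib, Finset.mul_sum, PiLp.sub_apply]
        ring
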